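/- Let n ≥ 3 and let h₁,…,hₙ be real numbers satisfying 2h₁ = -(h₃+⋯+h_{n-1}) and (h₁+⋯+hₙ)² - (h₁²+⋯+hₙ²) = 1/2. Then it is impossible that all of the quantities h₁ - 1/2, h₂ + 1/2, h₃, …, h_{n-1}, hₙ + 1/2 are positive. -/

import Mathlib

/-- Late-time Hubble rates of the `H₃ × ℝ^{n-3}` vacuum solution (with `k = 1`)
cannot all be positive. -/
theorem stmt_0 (n : ℕ) (hn : 3 ≤ n) (h : ℕ → ℝ)
    (hcon1 : 2 * h 1 = -(∑ i ∈ Finset.Icc 3 (n - 1), h i))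
    (hcon2 : (∑ i ∈ Finset.Icc 1 n, h i) ^ 2 - ∑ i ∈ Finset.Icc 1 n, (h i) ^ 2 = 1 / 2) :
    ¬ (0 < h 1 - 1 / 2 ∧ 0 < h 2 + 1 / 2 ∧
        (∀ i, 3 ≤ i → i ≤ n - 1 → 0 < h i) ∧ 0 < h n + 1 / 2) := by
  rintro ⟨h1, h2, h3, hlast⟩
  have hS : 0 ≤ ∑ i ∈ Finset.Icc 3 (n - 1), h i :=
    Finset.sum_nonneg fun i hi =>
      le_of_lt (h3 i (Finset.mem_Icc.mp hi).1 (Finset.mem_Icc.mp hi).2)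
  linarith
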